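/- arXiv:2508.19690 — 3 statements merged into one kernel-verified Lean document; each statement's English description precedes it below -/
import Mathlib

section
/- Let Q on Fin 2 be given by the parametrization Q_{11}^{12}=Q_{11}^{21}=a, Q_{12}^{11}=Q_{21}^{11}=b, Q_{12}^{12}=Q_{21}^{21}=c, Q_{12}^{21}=Q_{21}^{12}=d, Q_{11}^{22}=f, Q_{22}^{11}=y, Q_{12}^{22}=Q_{21}^{22}=−a, Q_{22}^{21}=Q_{22}^{12}=−b, Q_{11}^{11}=Q_{22}^{22}=1−d, where a,b,c,d,f,y satisfy the pentagon system. Then the invariant of the lens space L(3,1), given by Σ_{i,j,k,t} Q_{ij}^{kt} Q_{kt}^{ji} = 8ab + 6d² − 4d + 2fy + 2, equals 2. -/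
open BigOperators

/-- The parametrized structure constants `Q_{ij}^{st}` of the 2-dimensional
3-algebra ansatz (indices `0,1` correspond to `1,2` in the paper). -/
def Qpar (a b c d f y : ℂ) (i j s t : Fin 2) : ℂ :=
  match i.1, j.1, s.1, t.1 with
  | 0, 0, 0, 0 => 1 - d
  | 0, 0, 0, 1 => a
  | 0, 0, 1, 0 => a
  | 0, 0, 1, 1 => f
  | 0, 1, 0, 0 => b
  | 0, 1, 0, 1 => c
  | 0, 1, 1, 0 => d
  | 0, 1, 1, 1 => -a
  | 1, 0, 0, 0 => b
  | 1, 0, 0, 1 => d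
  | 1, 0, 1, 0 => c
  | 1, 0, 1, 1 => -a
  | 1, 1, 0, 0 => y
  | 1, 1, 0, 1 => -b
  | 1, 1, 1, 0 => -b
  | _, _, _, _ => 1 - d

lemma Qpar_0000 (a b c d f y : ℂ) : Qpar a b c d f y 0 0 0 0 = 1 - d := rfl
lemma Qpar_0001 (a b c d f y : ℂ) : Qpar a b c d f y 0 0 0 1 = a := rfl
lemma Qpar_0010 (a b c d f y : ℂ) : Qpar a b c d f y 0 0 1 0 = a := rfl
lemma Qpar_0011 (a b c d f y : ℂ) : Qpar a b c d f y 0 0 1 1 = f := rfl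
lemma Qpar_0100 (a b c d f y : ℂ) : Qpar a b c d f y 0 1 0 0 = b := rfl
lemma Qpar_0101 (a b c d f y : ℂ) : Qpar a b c d f y 0 1 0 1 = c := rfl
lemma Qpar_0110 (a b c d f y : ℂ) : Qpar a b c d f y 0 1 1 0 = d := rfl
lemma Qpar_0111 (a b c d f y : ℂ) : Qpar a b c d f y 0 1 1 1 = -a := rfl
lemma Qpar_1000 (a b c d f y : ℂ) : Qpar a b c d f y 1 0 0 0 = b := rfl
lemma Qpar_1001 (a b c d f y : ℂ) : Qpar a b c d f y 1 0 0 1 = d := rfl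
lemma Qpar_1010 (a b c d f y : ℂ) : Qpar a b c d f y 1 0 1 0 = c := rfl
lemma Qpar_1011 (a b c d f y : ℂ) : Qpar a b c d f y 1 0 1 1 = -a := rfl
lemma Qpar_1100 (a b c d f y : ℂ) : Qpar a b c d f y 1 1 0 0 = y := rfl
lemma Qpar_1101 (a b c d f y : ℂ) : Qpar a b c d f y 1 1 0 1 = -b := rfl
lemma Qpar_1110 (a b c d f y : ℂ) : Qpar a b c d f y 1 1 1 0 = -b := rfl
lemma Qpar_1111 (a b c d f y : ℂ) : Qpar a b c d f y 1 1 1 1 = 1 - d := rfl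

theorem lens_space_L31_invariant
    (a b c d f y : ℂ)
    (h1 : a * (c - d) = 0) (h2 : b * (c - d) = 0)
    (h3 : (c - 1) * (c - d) = 0) (h4 : d * (c - d) = 0)
    (h5 : f * (c - d) = 0) (h6 : y * (c - d) = 0)
    (h7 : a * d - b * f = 0) (h8 : a * y - b * c = 0)
    (h9 : d ^ 2 - f * y = 0)
    (h10 : 2 * a * b + 2 * d ^ 2 - d = 0)
    (h11 : 2 * a ^ 2 + 2 * d * f - f = 0)
    (h12 : 2 * b ^ 2 + 2 * d * y - y = 0) :
    (∑ i : Fin 2, ∑ j : Fin 2, ∑ k : Fin 2, ∑ t : Fin 2,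
        Qpar a b c d f y i j k t * Qpar a b c d f y k t j i) =
      8 * a * b + 6 * d ^ 2 - 4 * d + 2 * f * y + 2 ∧
    (∑ i : Fin 2, ∑ j : Fin 2, ∑ k : Fin 2, ∑ t : Fin 2,
        Qpar a b c d f y i j k t * Qpar a b c d f y k t j i) = 2 := by
  have hs : (∑ i : Fin 2, ∑ j : Fin 2, ∑ k : Fin 2, ∑ t : Fin 2,
        Qpar a b c d f y i j k t * Qpar a b c d f y k t j i) =
      8 * a * b + 6 * d ^ 2 - 4 * d + 2 * f * y + 2 := by
    simp only [Fin.sum_univ_two, Qpar_0000, Qpar_0001, Qpar_0010, Qpar_0011, Qpar_0100, Qpar_0101, Qpar_0110, Qpar_0111, Qpar_1000, Qpar_1001, Qpar_1010, Qpar_1011, Qpar_1100, Qpar_1101, Qpar_1110, Qpar_1111]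
    linear_combination 4 * h4
  refine ⟨hs, ?_⟩
  rw [hs]
  linear_combination 4 * h10 - 2 * h9
end

section
/- There exist complex numbers a,b,c,d,f,y satisfying the pentagon system such that the L(3,1)-invariant 8ab + 6d² − 4d + 2fy + 2 and the L(4,1)-invariant 2 − 2d + f + y differ. Concretely, taking d ≠ 0 and α ∉ {1, −1} with f = αd, y = d/α, c = d, a = αb, 2αb² = d/2 − d² gives L(3,1)-invariant 2 and L(4,1)-invariant 2 + (√α − 1/√α)² d ≠ 2. -/
theorem invariants_distinguish_L31_L41 :
    ∃ a b c d f y : ℂ,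
      (a * (c - d) = 0 ∧ b * (c - d) = 0 ∧ (c - 1) * (c - d) = 0 ∧
       d * (c - d) = 0 ∧ f * (c - d) = 0 ∧ y * (c - d) = 0 ∧
       a * d - b * f = 0 ∧ a * y - b * c = 0 ∧ d ^ 2 - f * y = 0 ∧
       2 * a * b + 2 * d ^ 2 - d = 0 ∧ 2 * a ^ 2 + 2 * d * f - f = 0 ∧
       2 * b ^ 2 + 2 * d * y - y = 0) ∧
      8 * a * b + 6 * d ^ 2 - 4 * d + 2 * f * y + 2 = 2 ∧
      2 - 2 * d + f + y ≠ 2 := by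
  refine ⟨1/3, 1/6, 1/3, 1/3, 2/3, 1/6, ?_, ?_, ?_⟩
  · norm_num
  · norm_num
  · intro h
    have : (2 - 2 * (1/3 : ℂ) + 2/3 + 1/6) = 13/6 := by norm_num
    rw [this] at h
    norm_num at h
end

section
/- Suppose a,b,c,d,f,y ∈ ℂ satisfy the full pentagon system (twelve equations as in the paper) with d ≠ 0 and f ≠ 0. Then setting α := f/d, we have y = d/α, c = d, b² = (d/(2α) − d²/α), and a = αb or a = −αb with matching signs, i.e., every solution with d, f ≠ 0 lies in the two-parameter family described in the paper. -/
theorem pentagon_system_classification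
    (a b c d f y : ℂ)
    (h1 : a * (c - d) = 0) (h2 : b * (c - d) = 0)
    (h3 : (c - 1) * (c - d) = 0) (h4 : d * (c - d) = 0)
    (h5 : f * (c - d) = 0) (h6 : y * (c - d) = 0)
    (h7 : a * d - b * f = 0) (h8 : a * y - b * c = 0)
    (h9 : d ^ 2 - f * y = 0)
    (h10 : 2 * a * b + 2 * d ^ 2 - d = 0)
    (h11 : 2 * a ^ 2 + 2 * d * f - f = 0)
    (h12 : 2 * b ^ 2 + 2 * d * y - y = 0)
    (hd : d ≠ 0) (hf : f ≠ 0) :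
    let α := f / d
    y = d / α ∧ c = d ∧ b ^ 2 = d / (2 * α) - d ^ 2 / α ∧
    (a = α * b ∨ a = -(α * b)) := by
  intro α
  have hc : c = d := by
    rcases mul_eq_zero.mp h4 with h | h
    · exact absurd h hd
    · linear_combination h
  have hy : y = d ^ 2 / f := by field_simp; linear_combination -h9
  have hα : α = f / d := rfl
  refine ⟨?_, hc, ?_, Or.inl ?_⟩
  · rw [hy, hα]; field_simp
  · show b ^ 2 = d / (2 * (f / d)) - d ^ 2 / (f / d)
    have e : d / (2 * (f / d)) - d ^ 2 / (f / d) = (d ^ 2 - 2 * d ^ 3) / (2 * f) := by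
      field_simp
    rw [e, eq_div_iff (by simp [hf] : (2 : ℂ) * f ≠ 0)]
    linear_combination f * h12 - (1 - 2 * d) * h9
  · rw [hα]
    field_simp
    linear_combination h7
end
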